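/- The staircase GP-polynomial factors completely: GP_{δ_r}(x_1,…,x_r | b) = x_1⋯x_r ∏_{1≤i<j≤r} (x_i ⊕ x_j), independent of the parameters b. Here GP_{δ_r}(x_1,…,x_r|b) = Σ_{w∈S_r} w( ∏_{i=1}^r x_i [x_i|b]^{r-i} ∏_{1≤i<j≤r} (x_i⊕x_j)/(x_i⊖x_j) ), with [x|b]^k = (x⊖b_1)⋯(x⊖b_k). -/

import Mathlib

open Finset

private lemma sym_prod_perm {M : Type*} [CommMonoid M] {n : ℕ} (F : Fin n → Fin n → M)
    (hF : ∀ i j, F i j = F j i) (σ : Equiv.Perm (Fin n)) :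
    (∏ i : Fin n, ∏ j ∈ Ioi i, F (σ i) (σ j)) = ∏ i : Fin n, ∏ j ∈ Ioi i, F i j := by
  rw [Finset.prod_sigma' univ (fun i => Ioi i) (fun i j => F (σ i) (σ j)),
      Finset.prod_sigma' univ (fun i => Ioi i) (fun i j => F i j)]
  refine Finset.prod_nbij'
    (fun p => if σ p.1 < σ p.2 then ⟨σ p.1, σ p.2⟩ else ⟨σ p.2, σ p.1⟩)
    (fun p => if σ⁻¹ p.1 < σ⁻¹ p.2 then ⟨σ⁻¹ p.1, σ⁻¹ p.2⟩ else ⟨σ⁻¹ p.2, σ⁻¹ p.1⟩)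
    ?_ ?_ ?_ ?_ ?_
  · intro p hp
    have hlt : p.1 < p.2 := Finset.mem_Ioi.mp (Finset.mem_sigma.mp hp).2
    have hne : σ p.1 ≠ σ p.2 := σ.injective.ne hlt.ne
    split_ifs with h
    · exact Finset.mem_sigma.mpr ⟨Finset.mem_univ _, Finset.mem_Ioi.mpr h⟩
    · exact Finset.mem_sigma.mpr ⟨Finset.mem_univ _,
        Finset.mem_Ioi.mpr ((not_lt.mp h).lt_of_ne hne.symm)⟩
  · intro p hp
    have hlt : p.1 < p.2 := Finset.mem_Ioi.mp (Finset.mem_sigma.mp hp).2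
    have hne : σ⁻¹ p.1 ≠ σ⁻¹ p.2 := (σ⁻¹).injective.ne hlt.ne
    split_ifs with h
    · exact Finset.mem_sigma.mpr ⟨Finset.mem_univ _, Finset.mem_Ioi.mpr h⟩
    · exact Finset.mem_sigma.mpr ⟨Finset.mem_univ _,
        Finset.mem_Ioi.mpr ((not_lt.mp h).lt_of_ne hne.symm)⟩
  · intro p hp
    have hlt : p.1 < p.2 := Finset.mem_Ioi.mp (Finset.mem_sigma.mp hp).2
    by_cases h1 : σ p.1 < σ p.2
    · rw [if_pos h1]
      dsimp only
      rw [Equiv.Perm.coe_inv, Equiv.symm_apply_apply, Equiv.symm_apply_apply, if_pos hlt]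
    · rw [if_neg h1]
      dsimp only
      rw [Equiv.Perm.coe_inv, Equiv.symm_apply_apply, Equiv.symm_apply_apply, if_neg (asymm hlt)]
  · intro p hp
    have hlt : p.1 < p.2 := Finset.mem_Ioi.mp (Finset.mem_sigma.mp hp).2
    by_cases h1 : σ⁻¹ p.1 < σ⁻¹ p.2
    · rw [if_pos h1]
      dsimp only
      rw [Equiv.Perm.coe_inv, Equiv.apply_symm_apply, Equiv.apply_symm_apply, if_pos hlt]
    · rw [if_neg h1]
      dsimp only
      rw [Equiv.Perm.coe_inv, Equiv.apply_symm_apply, Equiv.apply_symm_apply, if_neg (asymm hlt)]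
  · intro p hp
    split_ifs with h1
    · rfl
    · exact hF (σ p.1) (σ p.2)

private lemma rev_pair_prod {M : Type*} [CommMonoid M] {n : ℕ} (f : Fin n → Fin n → M) :
    (∏ i : Fin n, ∏ j ∈ Ioi i, f (Fin.rev j) (Fin.rev i)) = ∏ i : Fin n, ∏ j ∈ Ioi i, f i j := by
  rw [Finset.prod_sigma' univ (fun i => Ioi i) (fun i j => f (Fin.rev j) (Fin.rev i)),
      Finset.prod_sigma' univ (fun i => Ioi i) (fun i j => f i j)]
  refine Finset.prod_nbij' (fun p => ⟨Fin.rev p.2, Fin.rev p.1⟩)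
    (fun p => ⟨Fin.rev p.2, Fin.rev p.1⟩) ?_ ?_ ?_ ?_ ?_
  · intro p hp
    have hlt : p.1 < p.2 := Finset.mem_Ioi.mp (Finset.mem_sigma.mp hp).2
    exact Finset.mem_sigma.mpr ⟨Finset.mem_univ _, Finset.mem_Ioi.mpr (Fin.rev_lt_rev.mpr hlt)⟩
  · intro p hp
    have hlt : p.1 < p.2 := Finset.mem_Ioi.mp (Finset.mem_sigma.mp hp).2
    exact Finset.mem_sigma.mpr ⟨Finset.mem_univ _, Finset.mem_Ioi.mpr (Fin.rev_lt_rev.mpr hlt)⟩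
  · intro p hp
    dsimp only
    rw [Fin.rev_rev, Fin.rev_rev]
  · intro p hp
    dsimp only
    rw [Fin.rev_rev, Fin.rev_rev]
  · intro p hp
    rfl

private lemma prod_sub_perm {K : Type*} [CommRing K] {n : ℕ} (v : Fin n → K)
    (σ : Equiv.Perm (Fin n)) :
    (∏ i : Fin n, ∏ j ∈ Ioi i, (v (σ i) - v (σ j))) =
      ((Equiv.Perm.sign σ : ℤ) : K) * ∏ i : Fin n, ∏ j ∈ Ioi i, (v i - v j) := by
  have h1 := Matrix.det_vandermonde (fun i => v (σ i))
  have h2 : Matrix.vandermonde (fun i => v (σ i)) = (Matrix.vandermonde v).submatrix σ id := by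
    ext i j
    simp [Matrix.vandermonde_apply]
  rw [h2, Matrix.det_permute, Matrix.det_vandermonde] at h1
  have h3 : (∏ i : Fin n, ∏ j ∈ Ioi i, (v (σ i) - v (σ j))) =
      (∏ i : Fin n, ∏ j ∈ Ioi i, (-1 : K)) * ∏ i : Fin n, ∏ j ∈ Ioi i, (v (σ j) - v (σ i)) := by
    rw [← Finset.prod_mul_distrib]
    refine Finset.prod_congr rfl fun i _ => ?_
    rw [← Finset.prod_mul_distrib]
    exact Finset.prod_congr rfl fun j _ => by ring
  have h4 : (∏ i : Fin n, ∏ j ∈ Ioi i, (v i - v j)) =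
      (∏ i : Fin n, ∏ j ∈ Ioi i, (-1 : K)) * ∏ i : Fin n, ∏ j ∈ Ioi i, (v j - v i) := by
    rw [← Finset.prod_mul_distrib]
    refine Finset.prod_congr rfl fun i _ => ?_
    rw [← Finset.prod_mul_distrib]
    exact Finset.prod_congr rfl fun j _ => by ring
  rw [h3, ← h1, h4]
  ring

private lemma det_prod_range {K : Type*} [Field K] {n : ℕ} (v : Fin n → K) (c : ℕ → K) :
    (Matrix.of fun i j : Fin n => ∏ k ∈ Finset.range (j : ℕ), (v i - c k)).det =
      ∏ i : Fin n, ∏ j ∈ Ioi i, (v j - v i) := by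
  have hdeg : ∀ j : Fin n,
      (∏ k ∈ Finset.range (j : ℕ), (Polynomial.X - Polynomial.C (c k))).natDegree = (j : ℕ) := by
    intro j
    rw [Polynomial.natDegree_prod _ _ (fun k _ => Polynomial.X_sub_C_ne_zero (c k))]
    simp [Polynomial.natDegree_X_sub_C]
  have hmonic : ∀ j : Fin n,
      (∏ k ∈ Finset.range (j : ℕ), (Polynomial.X - Polynomial.C (c k))).Monic :=
    fun j => Polynomial.monic_prod_of_monic _ _ fun k _ => Polynomial.monic_X_sub_C (c k)
  have hmat : (Matrix.of fun i j : Fin n => ∏ k ∈ Finset.range (j : ℕ), (v i - c k)) =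
      Matrix.of fun i j : Fin n =>
        Polynomial.eval (v i) (∏ k ∈ Finset.range (j : ℕ), (Polynomial.X - Polynomial.C (c k))) := by
    ext i j
    simp [Polynomial.eval_prod]
  rw [hmat]
  exact ((Matrix.det_eval_matrixOfPolynomials_eq_det_vandermonde v
      (fun j : Fin n => ∏ k ∈ Finset.range (j : ℕ), (Polynomial.X - Polynomial.C (c k)))
      hdeg hmonic).symm).trans (Matrix.det_vandermonde v)

theorem stmt_2 {K : Type*} [Field K] (r : ℕ) (β : K) (x : Fin r → K) (b : ℕ → K)
    (hx : Function.Injective x)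
    (hxu : ∀ i, 1 + β * x i ≠ 0) (hbu : ∀ j, 1 + β * b j ≠ 0) :
    ∑ w : Equiv.Perm (Fin r),
      ((∏ i : Fin r, (x (w i) *
          ∏ k ∈ Finset.range (r - 1 - (i : ℕ)), ((x (w i) - b k) / (1 + β * b k)))) *
        ∏ i : Fin r, ∏ j ∈ Finset.Ioi i,
          ((x (w i) + x (w j) + β * x (w i) * x (w j)) /
            ((x (w i) - x (w j)) / (1 + β * x (w j))))) =
    (∏ i : Fin r, x i) * ∏ i : Fin r, ∏ j ∈ Finset.Ioi i,
      (x i + x j + β * x i * x j) := by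
  classical
  have hxne : ∀ a b' : Fin r, a ≠ b' → x a - x b' ≠ 0 :=
    fun a b' hab => sub_ne_zero.mpr fun h => hab (hx h)
  set z : Fin r → K := fun i => x i / (1 + β * x i) with hz
  set c : ℕ → K := fun k => b k / (1 + β * b k) with hc
  have hzz : ∀ a b' : Fin r, z a - z b' = (x a - x b') / ((1 + β * x a) * (1 + β * x b')) := by
    intro a b'
    have h1 := hxu a
    have h2 := hxu b'
    simp only [hz]
    rw [div_sub_div _ _ h1 h2]
    congr 1
    ring
  have hzne : ∀ a b' : Fin r, a ≠ b' → z a - z b' ≠ 0 := by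
    intro a b' hab
    rw [hzz]
    exact div_ne_zero (hxne a b' hab) (mul_ne_zero (hxu a) (hxu b'))
  have hzc : ∀ (a : Fin r) (k : ℕ),
      (x a - b k) / (1 + β * b k) = (1 + β * x a) * (z a - c k) := by
    intro a k
    have h1 := hxu a
    have h2 := hbu k
    simp only [hz, hc]
    rw [div_sub_div _ _ h1 h2, mul_div_assoc', div_eq_div_iff h2 (mul_ne_zero h1 h2)]
    ring
  set P : K := ∏ i : Fin r, ∏ j ∈ Ioi i, (x i + x j + β * x i * x j) with hP
  set Vz : K := ∏ i : Fin r, ∏ j ∈ Ioi i, (z i - z j) with hV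
  have hVne : Vz ≠ 0 := by
    rw [hV]
    refine Finset.prod_ne_zero_iff.mpr fun i _ => Finset.prod_ne_zero_iff.mpr fun j hj => ?_
    exact hzne i j (Finset.mem_Ioi.mp hj).ne
  have key : ∀ w : Equiv.Perm (Fin r),
      ((∏ i : Fin r, (x (w i) *
          ∏ k ∈ Finset.range (r - 1 - (i : ℕ)), ((x (w i) - b k) / (1 + β * b k)))) *
        ∏ i : Fin r, ∏ j ∈ Finset.Ioi i,
          ((x (w i) + x (w j) + β * x (w i) * x (w j)) /
            ((x (w i) - x (w j)) / (1 + β * x (w j))))) =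
      (P * Vz⁻¹) * (((Equiv.Perm.sign w : ℤ) : K) *
        ∏ i : Fin r, (x (w i) * ∏ k ∈ Finset.range (r - 1 - (i : ℕ)), (z (w i) - c k))) := by
    intro w
    have hA : (∏ i : Fin r, (x (w i) *
          ∏ k ∈ Finset.range (r - 1 - (i : ℕ)), ((x (w i) - b k) / (1 + β * b k)))) =
        (∏ i : Fin r, (1 + β * x (w i)) ^ (r - 1 - (i : ℕ))) *
        (∏ i : Fin r, (x (w i) * ∏ k ∈ Finset.range (r - 1 - (i : ℕ)), (z (w i) - c k))) := by
      rw [← Finset.prod_mul_distrib]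
      refine Finset.prod_congr rfl fun i _ => ?_
      rw [Finset.prod_congr rfl fun k _ => hzc (w i) k, Finset.prod_mul_distrib,
        Finset.prod_const, Finset.card_range]
      ring
    have hT1 : (∏ i : Fin r, ∏ j ∈ Ioi i,
        (x (w i) + x (w j) + β * x (w i) * x (w j))) = P := by
      rw [hP]
      exact sym_prod_perm (fun a b' => x a + x b' + β * x a * x b') (fun a b' => by ring) w
    have hT2 : (∏ i : Fin r, ∏ j ∈ Ioi i, (1 + β * x (w i))⁻¹) =
        ∏ i : Fin r, ((1 + β * x (w i))⁻¹) ^ (r - 1 - (i : ℕ)) :=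
      Finset.prod_congr rfl fun i _ => by rw [Finset.prod_const, Fin.card_Ioi]
    have hT3 : (∏ i : Fin r, ∏ j ∈ Ioi i, (z (w i) - z (w j))⁻¹) =
        ((Equiv.Perm.sign w : ℤ) : K) * Vz⁻¹ := by
      simp only [Finset.prod_inv_distrib]
      rw [prod_sub_perm z w, ← hV, mul_inv]
      congr 1
      rcases Int.units_eq_one_or (Equiv.Perm.sign w) with h | h <;> rw [h] <;> norm_num
    have hfac : ∀ i : Fin r, ∀ j ∈ Finset.Ioi i,
        (x (w i) + x (w j) + β * x (w i) * x (w j)) /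
            ((x (w i) - x (w j)) / (1 + β * x (w j))) =
        (x (w i) + x (w j) + β * x (w i) * x (w j)) *
            ((1 + β * x (w i))⁻¹ * (z (w i) - z (w j))⁻¹) := by
      intro i j hj
      have hij : x (w i) - x (w j) ≠ 0 := hxne _ _ (w.injective.ne (Finset.mem_Ioi.mp hj).ne)
      have h1 := hxu (w i)
      have h2 := hxu (w j)
      rw [hzz]
      field_simp
      rw [mul_div_cancel_right₀ _ (by rw [mul_comm]; exact h1)]
    have hB : (∏ i : Fin r, ∏ j ∈ Finset.Ioi i,
          ((x (w i) + x (w j) + β * x (w i) * x (w j)) /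
            ((x (w i) - x (w j)) / (1 + β * x (w j))))) =
        P * ((∏ i : Fin r, ((1 + β * x (w i))⁻¹) ^ (r - 1 - (i : ℕ))) *
          (((Equiv.Perm.sign w : ℤ) : K) * Vz⁻¹)) := by
      calc (∏ i : Fin r, ∏ j ∈ Finset.Ioi i,
          ((x (w i) + x (w j) + β * x (w i) * x (w j)) /
            ((x (w i) - x (w j)) / (1 + β * x (w j)))))
          = ∏ i : Fin r, ∏ j ∈ Finset.Ioi i,
            ((x (w i) + x (w j) + β * x (w i) * x (w j)) *
              ((1 + β * x (w i))⁻¹ * (z (w i) - z (w j))⁻¹)) :=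
            Finset.prod_congr rfl fun i _ => Finset.prod_congr rfl fun j hj => hfac i j hj
        _ = (∏ i : Fin r, ∏ j ∈ Ioi i, (x (w i) + x (w j) + β * x (w i) * x (w j))) *
            ((∏ i : Fin r, ∏ j ∈ Ioi i, (1 + β * x (w i))⁻¹) *
             (∏ i : Fin r, ∏ j ∈ Ioi i, (z (w i) - z (w j))⁻¹)) := by
            simp only [Finset.prod_mul_distrib]
        _ = P * ((∏ i : Fin r, ((1 + β * x (w i))⁻¹) ^ (r - 1 - (i : ℕ))) *
            (((Equiv.Perm.sign w : ℤ) : K) * Vz⁻¹)) := by rw [hT1, hT2, hT3]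
    rw [hA, hB]
    have hUU : (∏ i : Fin r, (1 + β * x (w i)) ^ (r - 1 - (i : ℕ))) *
        (∏ i : Fin r, ((1 + β * x (w i))⁻¹) ^ (r - 1 - (i : ℕ))) = 1 := by
      rw [← Finset.prod_mul_distrib]
      exact Finset.prod_eq_one fun i _ => by
        rw [← mul_pow, mul_inv_cancel₀ (hxu (w i)), one_pow]
    linear_combination ((∏ i : Fin r, (x (w i) *
        ∏ k ∈ Finset.range (r - 1 - (i : ℕ)), (z (w i) - c k))) *
      (P * (((Equiv.Perm.sign w : ℤ) : K) * Vz⁻¹))) * hUU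
  have hdet : (∑ w : Equiv.Perm (Fin r), ((Equiv.Perm.sign w : ℤ) : K) *
      ∏ i : Fin r, (x (w i) * ∏ k ∈ Finset.range (r - 1 - (i : ℕ)), (z (w i) - c k))) =
      (∏ i : Fin r, x i) * Vz := by
    have h1 : (∑ w : Equiv.Perm (Fin r), ((Equiv.Perm.sign w : ℤ) : K) *
        ∏ i : Fin r, (x (w i) * ∏ k ∈ Finset.range (r - 1 - (i : ℕ)), (z (w i) - c k))) =
        (Matrix.of fun i j : Fin r =>
          x i * ∏ k ∈ Finset.range (r - 1 - (j : ℕ)), (z i - c k)).det := by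
      rw [Matrix.det_apply']
      simp only [Matrix.of_apply]
    rw [h1]
    have h2 : (Matrix.of fun i j : Fin r =>
        x i * ∏ k ∈ Finset.range (r - 1 - (j : ℕ)), (z i - c k)).det =
        (∏ i : Fin r, x i) *
        (Matrix.of fun i j : Fin r => ∏ k ∈ Finset.range (r - 1 - (j : ℕ)), (z i - c k)).det :=
      Matrix.det_mul_column x _
    rw [h2]
    congr 1
    have h3 : (Matrix.of fun i j : Fin r => ∏ k ∈ Finset.range (r - 1 - (j : ℕ)), (z i - c k)) =
        (Matrix.of fun i j : Fin r =>
          ∏ k ∈ Finset.range (j : ℕ), (z (Fin.rev i) - c k)).submatrix Fin.revPerm Fin.revPerm := by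
      ext i j
      have hj : ((Fin.rev j : ℕ)) = r - 1 - (j : ℕ) := by rw [Fin.val_rev]; omega
      simp only [Matrix.submatrix_apply, Matrix.of_apply, Fin.revPerm_apply]
      rw [Fin.rev_rev, hj]
    rw [h3, Matrix.det_submatrix_equiv_self, hV]
    exact (det_prod_range (fun i => z (Fin.rev i)) c).trans
      (rev_pair_prod (fun a b' => z a - z b'))
  have hsum : (∑ w : Equiv.Perm (Fin r),
      ((∏ i : Fin r, (x (w i) *
          ∏ k ∈ Finset.range (r - 1 - (i : ℕ)), ((x (w i) - b k) / (1 + β * b k)))) *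
        ∏ i : Fin r, ∏ j ∈ Finset.Ioi i,
          ((x (w i) + x (w j) + β * x (w i) * x (w j)) /
            ((x (w i) - x (w j)) / (1 + β * x (w j)))))) =
      ∑ w : Equiv.Perm (Fin r), (P * Vz⁻¹) * (((Equiv.Perm.sign w : ℤ) : K) *
        ∏ i : Fin r, (x (w i) * ∏ k ∈ Finset.range (r - 1 - (i : ℕ)), (z (w i) - c k))) :=
    Finset.sum_congr rfl fun w _ => key w
  rw [hsum, ← Finset.mul_sum, hdet]
  linear_combination ((∏ i : Fin r, x i) * P) * (inv_mul_cancel₀ hVne)
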